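/- Suppose Φ_g ≠ 0, every complex zero of Ξ_0 is real, and every zero of Ξ_0 is simple (i.e., the derivative Ξ_0' is nonzero at each zero of Ξ_0). Then there exists t < 0 such that every complex zero of Ξ_t is real. (In the L-function setting this says that if Ξ_0(·, χ_D) has only simple zeros then the De Bruijn–Newman constant Λ_D is strictly negative.) -/

import Mathlib

set_option maxHeartbeats 1000000


open Complex Filter Topology

/-- The deformation `Ξ_t(z) = Φ₀ + ∑_{n=1}^g Φₙ e^{t n²} (e^{inz} + e^{-inz})`. -/
noncomputable def Xi (g : ℕ) (Φ : ℕ → ℝ) (t : ℝ) (z : ℂ) : ℂ :=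
  (Φ 0 : ℂ) + ∑ n ∈ Finset.Icc 1 g,
    (Φ n : ℂ) * (Real.exp (t * (n : ℝ) ^ 2) : ℂ) *
      (Complex.exp ((n : ℂ) * Complex.I * z) + Complex.exp (-((n : ℂ) * Complex.I * z)))

noncomputable def XiD (g : ℕ) (Φ : ℕ → ℝ) (t : ℝ) (z : ℂ) : ℂ :=
  ∑ n ∈ Finset.Icc 1 g,
    (Φ n : ℂ) * (Real.exp (t * (n : ℝ) ^ 2) : ℂ) *
      ((n : ℂ) * Complex.I * Complex.exp ((n : ℂ) * Complex.I * z)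
        - (n : ℂ) * Complex.I * Complex.exp (-((n : ℂ) * Complex.I * z)))

lemma hasDerivAt_Xi (g : ℕ) (Φ : ℕ → ℝ) (t : ℝ) (z : ℂ) :
    HasDerivAt (Xi g Φ t) (XiD g Φ t z) z := by
  have h : ∀ n ∈ Finset.Icc 1 g, HasDerivAt
      (fun z => (Φ n : ℂ) * (Real.exp (t * (n : ℝ) ^ 2) : ℂ) *
        (Complex.exp ((n : ℂ) * Complex.I * z) + Complex.exp (-((n : ℂ) * Complex.I * z))))
      ((Φ n : ℂ) * (Real.exp (t * (n : ℝ) ^ 2) : ℂ) *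
        ((n : ℂ) * Complex.I * Complex.exp ((n : ℂ) * Complex.I * z)
          - (n : ℂ) * Complex.I * Complex.exp (-((n : ℂ) * Complex.I * z)))) z := by
    intro n _
    have h1 : HasDerivAt (fun z : ℂ => (n : ℂ) * Complex.I * z) ((n : ℂ) * Complex.I) z := by
      simpa using (hasDerivAt_id z).const_mul ((n : ℂ) * Complex.I)
    have h2 : HasDerivAt (fun z : ℂ => -((n : ℂ) * Complex.I * z)) (-((n : ℂ) * Complex.I)) z :=
      h1.neg
    have := ((h1.cexp).add (h2.cexp)).const_mul
      ((Φ n : ℂ) * (Real.exp (t * (n : ℝ) ^ 2) : ℂ))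
    refine this.congr_deriv ?_
    ring
  have := (HasDerivAt.fun_sum h).const_add ((Φ 0 : ℝ) : ℂ)
  simp only [XiD]; exact this

lemma continuous_Xi (g : ℕ) (Φ : ℕ → ℝ) :
    Continuous (fun p : ℝ × ℂ => Xi g Φ p.1 p.2) := by
  unfold Xi; fun_prop

lemma continuous_XiD (g : ℕ) (Φ : ℕ → ℝ) :
    Continuous (fun p : ℝ × ℂ => XiD g Φ p.1 p.2) := by
  unfold XiD; fun_prop

lemma Xi_conj (g : ℕ) (Φ : ℕ → ℝ) (t : ℝ) (z : ℂ) :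
    Xi g Φ t ((starRingEnd ℂ) z) = (starRingEnd ℂ) (Xi g Φ t z) := by
  unfold Xi
  rw [map_add, map_sum]
  congr 1
  · simp
  refine Finset.sum_congr rfl fun n _ => ?_
  rw [map_mul, map_add, ← Complex.exp_conj, ← Complex.exp_conj]
  simp only [map_mul, map_neg, Complex.conj_I, Complex.conj_natCast, Complex.conj_ofReal]
  ring_nf

lemma Xi_period (g : ℕ) (Φ : ℕ → ℝ) (t : ℝ) (z : ℂ) (m : ℤ) :
    Xi g Φ t (z + ((2 * Real.pi * m : ℝ) : ℂ)) = Xi g Φ t z := by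
  unfold Xi
  congr 1
  refine Finset.sum_congr rfl fun n _ => ?_
  have key : ∀ s : ℂ, ∀ k : ℤ, Complex.exp (s + (n : ℂ) * Complex.I * ((2 * Real.pi * k : ℝ) : ℂ))
      = Complex.exp s := by
    intro s k
    rw [Complex.exp_add]
    have : (n : ℂ) * Complex.I * ((2 * Real.pi * k : ℝ) : ℂ)
        = ((n * k : ℤ) : ℂ) * (2 * Real.pi * Complex.I) := by push_cast; ring
    rw [this, Complex.exp_int_mul_two_pi_mul_I, mul_one]
  have h1 : (n : ℂ) * Complex.I * (z + ((2 * Real.pi * m : ℝ) : ℂ))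
      = (n : ℂ) * Complex.I * z + (n : ℂ) * Complex.I * ((2 * Real.pi * m : ℝ) : ℂ) := by ring
  have h2 : -((n : ℂ) * Complex.I * (z + ((2 * Real.pi * m : ℝ) : ℂ)))
      = -((n : ℂ) * Complex.I * z) + (n : ℂ) * Complex.I * ((2 * Real.pi * (-m : ℤ) : ℝ) : ℂ) := by
    push_cast; ring
  rw [h2, h1, key, key]

lemma Xi_im_le (g : ℕ) (hg : 1 ≤ g) (Φ : ℕ → ℝ) (hΦ : Φ g ≠ 0) :
    ∃ Y : ℝ, 0 ≤ Y ∧ ∀ t : ℝ, -1 ≤ t → t ≤ 0 → ∀ z : ℂ, Xi g Φ t z = 0 → z.im ≤ Y := by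
  set A : ℝ := |Φ 0| + |Φ g| + ∑ n ∈ Finset.Icc 1 g, 2 * |Φ n| with hA
  have hΦg : 0 < |Φ g| := abs_pos.mpr hΦ
  have hApos : 0 < A := by
    have h1 : (0:ℝ) ≤ ∑ n ∈ Finset.Icc 1 g, 2 * |Φ n| :=
      Finset.sum_nonneg fun n _ => by positivity
    have h0 : (0:ℝ) ≤ |Φ 0| := abs_nonneg _
    linarith
  set C : ℝ := A * Real.exp ((g:ℝ)^2) / |Φ g| with hC
  have hCpos : 0 < C := by positivity
  refine ⟨max 0 (Real.log C), le_max_left _ _, ?_⟩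
  intro t ht1 ht0 z hz
  rcases le_or_gt z.im 0 with hy | hy
  · exact hy.trans (le_max_left _ _)
  -- now 0 < z.im
  have hgmem : g ∈ Finset.Icc 1 g := Finset.mem_Icc.mpr ⟨hg, le_rfl⟩
  set y : ℝ := z.im with hydef
  set f : ℕ → ℂ := fun n => (Φ n : ℂ) * (Real.exp (t * (n : ℝ) ^ 2) : ℂ) *
      (Complex.exp ((n : ℂ) * Complex.I * z) + Complex.exp (-((n : ℂ) * Complex.I * z))) with hf
  have hsplit : (Φ g : ℂ) * (Real.exp (t * (g : ℝ) ^ 2) : ℂ) *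
      Complex.exp (-((g : ℂ) * Complex.I * z))
      = -(Φ 0 : ℂ) - (∑ n ∈ (Finset.Icc 1 g).erase g, f n)
        - (Φ g : ℂ) * (Real.exp (t * (g : ℝ) ^ 2) : ℂ) * Complex.exp ((g : ℂ) * Complex.I * z) := by
    have h0 := hz
    unfold Xi at h0
    rw [← Finset.sum_erase_add _ _ hgmem] at h0
    rw [hf]
    linear_combination h0
  -- norms of exponentials
  have hnr : ∀ r : ℝ, ‖(r:ℂ)‖ = |r| := fun r => by
    rw [Complex.norm_real, Real.norm_eq_abs]
  have hre : ∀ n : ℕ, ((n : ℂ) * Complex.I * z).re = -(n * y) := by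
    intro n; simp [Complex.mul_re, Complex.mul_im, hydef]
  have hnorm_exp : ∀ n : ℕ, ‖Complex.exp ((n : ℂ) * Complex.I * z)‖ = Real.exp (-(n * y)) := by
    intro n; rw [Complex.norm_exp, hre]
  have hnorm_exp' : ∀ n : ℕ, ‖Complex.exp (-((n : ℂ) * Complex.I * z))‖ = Real.exp (n * y) := by
    intro n; rw [Complex.norm_exp, Complex.neg_re, hre]; ring_nf
  have hEle : ∀ n : ℕ, Real.exp (t * (n:ℝ)^2) ≤ 1 := by
    intro n
    rw [Real.exp_le_one_iff]
    nlinarith [sq_nonneg (n:ℝ)]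
  have hEpos : ∀ n : ℕ, (0:ℝ) < Real.exp (t * (n:ℝ)^2) := fun n => Real.exp_pos _
  -- bound each small term
  have hterm : ∀ n ∈ (Finset.Icc 1 g).erase g,
      ‖f n‖ ≤ 2 * |Φ n| * Real.exp (((g:ℝ) - 1) * y) := by
    intro n hn
    rcases Finset.mem_erase.mp hn with ⟨hne, hmem⟩
    have hng : (n:ℝ) ≤ (g:ℝ) - 1 := by
      have : n < g := lt_of_le_of_ne (Finset.mem_Icc.mp hmem).2 hne
      have : n + 1 ≤ g := this
      have := (Nat.cast_le (α := ℝ)).mpr this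
      push_cast at this; linarith
    have h1 : ‖f n‖ = |Φ n| * Real.exp (t * (n:ℝ)^2) *
        ‖Complex.exp ((n : ℂ) * Complex.I * z) + Complex.exp (-((n : ℂ) * Complex.I * z))‖ := by
      rw [hf]
      simp only [norm_mul, hnr]
      rw [abs_of_pos (Real.exp_pos _)]
    rw [h1]
    have h2 : ‖Complex.exp ((n : ℂ) * Complex.I * z) + Complex.exp (-((n : ℂ) * Complex.I * z))‖
        ≤ 2 * Real.exp (((g:ℝ) - 1) * y) := by
      refine (norm_add_le _ _).trans ?_
      rw [hnorm_exp, hnorm_exp']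
      have e1 : Real.exp (-(n * y)) ≤ Real.exp (((g:ℝ)-1) * y) := by
        apply Real.exp_le_exp.mpr; nlinarith [hy, Nat.cast_nonneg (α := ℝ) n]
      have e2 : Real.exp ((n:ℝ) * y) ≤ Real.exp (((g:ℝ)-1) * y) := by
        apply Real.exp_le_exp.mpr; nlinarith
      linarith
    calc |Φ n| * Real.exp (t * (n:ℝ)^2) *
        ‖Complex.exp ((n : ℂ) * Complex.I * z) + Complex.exp (-((n : ℂ) * Complex.I * z))‖
        ≤ |Φ n| * 1 * (2 * Real.exp (((g:ℝ) - 1) * y)) := by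
          apply mul_le_mul
          · exact mul_le_mul_of_nonneg_left (hEle n) (abs_nonneg _)
          · exact h2
          · positivity
          · positivity
      _ = 2 * |Φ n| * Real.exp (((g:ℝ) - 1) * y) := by ring
  -- main inequality
  have hmain : |Φ g| * Real.exp (t * (g:ℝ)^2) * Real.exp ((g:ℝ) * y) ≤
      A * Real.exp (((g:ℝ) - 1) * y) := by
    have hL : ‖(Φ g : ℂ) * (Real.exp (t * (g : ℝ) ^ 2) : ℂ) *
        Complex.exp (-((g : ℂ) * Complex.I * z))‖
        = |Φ g| * Real.exp (t * (g:ℝ)^2) * Real.exp ((g:ℝ) * y) := by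
      rw [norm_mul, norm_mul, hnorm_exp', hnr, hnr, abs_of_pos (Real.exp_pos _)]
    have hR : ‖-(Φ 0 : ℂ) - (∑ n ∈ (Finset.Icc 1 g).erase g, f n)
        - (Φ g : ℂ) * (Real.exp (t * (g : ℝ) ^ 2) : ℂ) * Complex.exp ((g : ℂ) * Complex.I * z)‖
        ≤ A * Real.exp (((g:ℝ) - 1) * y) := by
      have e1 : ‖-(Φ 0 : ℂ)‖ = |Φ 0| := by rw [norm_neg, hnr]
      have e2 : ‖∑ n ∈ (Finset.Icc 1 g).erase g, f n‖
          ≤ ∑ n ∈ (Finset.Icc 1 g).erase g, 2 * |Φ n| * Real.exp (((g:ℝ) - 1) * y) :=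
        (norm_sum_le _ _).trans (Finset.sum_le_sum hterm)
      have e2' : ∑ n ∈ (Finset.Icc 1 g).erase g, 2 * |Φ n| * Real.exp (((g:ℝ) - 1) * y)
          ≤ ∑ n ∈ Finset.Icc 1 g, 2 * |Φ n| * Real.exp (((g:ℝ) - 1) * y) := by
        apply Finset.sum_le_sum_of_subset_of_nonneg (Finset.erase_subset _ _)
        intro n _ _; positivity
      have e2'' : ∑ n ∈ Finset.Icc 1 g, 2 * |Φ n| * Real.exp (((g:ℝ) - 1) * y)
          = (∑ n ∈ Finset.Icc 1 g, 2 * |Φ n|) * Real.exp (((g:ℝ) - 1) * y) := by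
        rw [Finset.sum_mul]
      have e3 : ‖(Φ g : ℂ) * (Real.exp (t * (g : ℝ) ^ 2) : ℂ) *
          Complex.exp ((g : ℂ) * Complex.I * z)‖ ≤ |Φ g| := by
        rw [norm_mul, norm_mul, hnorm_exp]
        have : Real.exp (-((g:ℝ) * y)) ≤ 1 := by
          rw [Real.exp_le_one_iff]; nlinarith [Nat.cast_nonneg (α := ℝ) g]
        calc ‖((Φ g : ℝ) : ℂ)‖ * ‖((Real.exp (t * (g : ℝ) ^ 2) : ℝ) : ℂ)‖ * Real.exp (-((g:ℝ) * y))
            ≤ |Φ g| * 1 * 1 := by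
              apply mul_le_mul
              · apply mul_le_mul
                · rw [hnr]
                · rw [hnr, abs_of_pos (Real.exp_pos _)]; exact hEle g
                · positivity
                · exact abs_nonneg _
              · exact this
              · positivity
              · positivity
          _ = |Φ g| := by ring
      have expo1 : (1:ℝ) ≤ Real.exp (((g:ℝ) - 1) * y) := by
        rw [Real.one_le_exp_iff]
        have : (1:ℝ) ≤ (g:ℝ) := by exact_mod_cast hg
        nlinarith
      calc ‖-(Φ 0 : ℂ) - (∑ n ∈ (Finset.Icc 1 g).erase g, f n)
          - (Φ g : ℂ) * (Real.exp (t * (g : ℝ) ^ 2) : ℂ) * Complex.exp ((g : ℂ) * Complex.I * z)‖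
          ≤ ‖-(Φ 0 : ℂ) - (∑ n ∈ (Finset.Icc 1 g).erase g, f n)‖
            + ‖(Φ g : ℂ) * (Real.exp (t * (g : ℝ) ^ 2) : ℂ) *
              Complex.exp ((g : ℂ) * Complex.I * z)‖ := norm_sub_le _ _
        _ ≤ (‖-(Φ 0 : ℂ)‖ + ‖∑ n ∈ (Finset.Icc 1 g).erase g, f n‖) + |Φ g| :=
            add_le_add (norm_sub_le _ _) e3
        _ ≤ (|Φ 0| + (∑ n ∈ Finset.Icc 1 g, 2 * |Φ n|) * Real.exp (((g:ℝ) - 1) * y)) + |Φ g| := by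
            rw [e1]
            have := e2.trans (e2'.trans_eq e2'')
            linarith
        _ ≤ A * Real.exp (((g:ℝ) - 1) * y) := by
            rw [hA]
            have h1 : |Φ 0| ≤ |Φ 0| * Real.exp (((g:ℝ) - 1) * y) := by
              nlinarith [abs_nonneg (Φ 0)]
            have h2 : |Φ g| ≤ |Φ g| * Real.exp (((g:ℝ) - 1) * y) := by nlinarith
            nlinarith
    calc |Φ g| * Real.exp (t * (g:ℝ)^2) * Real.exp ((g:ℝ) * y) = _ := hL.symm
      _ ≤ _ := by rw [hsplit]; exact hR
  -- extract e^y ≤ C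
  have hexpy : Real.exp y ≤ C := by
    have hEg : Real.exp (-((g:ℝ)^2)) ≤ Real.exp (t * (g:ℝ)^2) := by
      apply Real.exp_le_exp.mpr; nlinarith [sq_nonneg (g:ℝ)]
    have hgy : Real.exp ((g:ℝ) * y) = Real.exp y * Real.exp (((g:ℝ) - 1) * y) := by
      rw [← Real.exp_add]; ring_nf
    have step : |Φ g| * Real.exp (-((g:ℝ)^2)) * Real.exp y ≤ A := by
      have h1 : |Φ g| * Real.exp (-((g:ℝ)^2)) * (Real.exp y * Real.exp (((g:ℝ) - 1) * y))
          ≤ A * Real.exp (((g:ℝ) - 1) * y) := by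
        calc |Φ g| * Real.exp (-((g:ℝ)^2)) * (Real.exp y * Real.exp (((g:ℝ) - 1) * y))
            ≤ |Φ g| * Real.exp (t * (g:ℝ)^2) * (Real.exp y * Real.exp (((g:ℝ) - 1) * y)) := by
              have hX : (0:ℝ) ≤ Real.exp y * Real.exp (((g:ℝ) - 1) * y) := by positivity
              exact mul_le_mul_of_nonneg_right (mul_le_mul_of_nonneg_left hEg hΦg.le) hX
          _ = |Φ g| * Real.exp (t * (g:ℝ)^2) * Real.exp ((g:ℝ) * y) := by rw [hgy]
          _ ≤ A * Real.exp (((g:ℝ) - 1) * y) := hmain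
      have h2 : (0:ℝ) < Real.exp (((g:ℝ) - 1) * y) := Real.exp_pos _
      rw [← mul_assoc] at h1
      exact le_of_mul_le_mul_right h1 h2
    rw [hC, le_div_iff₀ hΦg]
    have hinv : Real.exp (-((g:ℝ)^2)) * Real.exp ((g:ℝ)^2) = 1 := by
      rw [← Real.exp_add, neg_add_cancel, Real.exp_zero]
    have hmul := mul_le_mul_of_nonneg_right step (Real.exp_pos ((g:ℝ)^2)).le
    have hrw : |Φ g| * Real.exp (-((g:ℝ)^2)) * Real.exp y * Real.exp ((g:ℝ)^2)
        = Real.exp y * |Φ g| * (Real.exp (-((g:ℝ)^2)) * Real.exp ((g:ℝ)^2)) := by ring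
    rw [hrw, hinv, mul_one] at hmul
    exact hmul
  have : y ≤ Real.log C := (Real.le_log_iff_exp_le hCpos).mpr hexpy
  exact this.trans (le_max_right _ _)

/-- If `Φ_g ≠ 0` and every zero of `Ξ_0` is real and simple, then there is some `t < 0`
such that every zero of `Ξ_t` is still real; i.e. the De Bruijn--Newman constant of a
function field `L`-function with simple zeros is strictly negative. -/
theorem lambda_neg_of_simple_zeros (g : ℕ) (hg : 1 ≤ g) (Φ : ℕ → ℝ) (hΦ : Φ g ≠ 0)
    (hreal : ∀ z : ℂ, Xi g Φ 0 z = 0 → z.im = 0)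
    (hsimple : ∀ z : ℂ, Xi g Φ 0 z = 0 → deriv (Xi g Φ 0) z ≠ 0) :
    ∃ t : ℝ, t < 0 ∧ ∀ z : ℂ, Xi g Φ t z = 0 → z.im = 0 := by
  by_contra hcon
  push_neg at hcon
  obtain ⟨Y, hY0, hY⟩ := Xi_im_le g hg Φ hΦ
  have hπ : (0:ℝ) < Real.pi := Real.pi_pos
  set t : ℕ → ℝ := fun k => -(1 / ((k:ℝ) + 1)) with htdef
  have htneg : ∀ k, t k < 0 := by
    intro k; rw [htdef]; simp only; rw [neg_lt, neg_zero]; positivity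
  have ht1 : ∀ k, -1 ≤ t k := by
    intro k
    have h : (1:ℝ) / ((k:ℝ) + 1) ≤ 1 := by
      rw [div_le_one (by positivity)]; linarith [Nat.cast_nonneg (α := ℝ) k]
    have : t k = -(1 / ((k:ℝ) + 1)) := rfl
    rw [this]; linarith
  choose zz hzz hzim using fun k => hcon (t k) (htneg k)
  set m : ℕ → ℤ := fun k => ⌊(zz k).re / (2 * Real.pi)⌋ with hm
  set w : ℕ → ℂ := fun k => zz k - ((2 * Real.pi * (m k) : ℝ) : ℂ) with hw
  have hw0 : ∀ k, Xi g Φ (t k) (w k) = 0 := by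
    intro k
    have h1 := Xi_period g Φ (t k) (w k) (m k)
    have h2 : w k + ((2 * Real.pi * (m k) : ℝ) : ℂ) = zz k := by rw [hw]; ring
    rw [h2] at h1
    rw [← h1, hzz]
  have hwim : ∀ k, (w k).im = (zz k).im := by
    intro k; rw [hw]; simp
  have hwim_ne : ∀ k, (w k).im ≠ 0 := fun k => (hwim k) ▸ hzim k
  -- |im| ≤ Y
  have habs : ∀ k, |(w k).im| ≤ Y := by
    intro k
    have h1 : (w k).im ≤ Y := hY (t k) (ht1 k) (htneg k).le _ (hw0 k)
    have hconj : Xi g Φ (t k) ((starRingEnd ℂ) (w k)) = 0 := by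
      rw [Xi_conj, hw0, map_zero]
    have h2 : ((starRingEnd ℂ) (w k)).im ≤ Y := hY (t k) (ht1 k) (htneg k).le _ hconj
    rw [Complex.conj_im] at h2
    rw [abs_le]; constructor <;> linarith
  -- re bounds
  have hre : ∀ k, 0 ≤ (w k).re ∧ (w k).re ≤ 2 * Real.pi := by
    intro k
    have h2π : (0:ℝ) < 2 * Real.pi := by linarith
    have heq : (w k).re = 2 * Real.pi * Int.fract ((zz k).re / (2 * Real.pi)) := by
      rw [hw]; simp only [Complex.sub_re, Complex.ofReal_re]
      rw [Int.fract]
      field_simp [hm]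
      rfl
    constructor
    · rw [heq]; exact mul_nonneg h2π.le (Int.fract_nonneg _)
    · rw [heq]
      calc 2 * Real.pi * Int.fract ((zz k).re / (2 * Real.pi)) ≤ 2 * Real.pi * 1 :=
        mul_le_mul_of_nonneg_left (Int.fract_lt_one _).le h2π.le
      _ = 2 * Real.pi := mul_one _
  -- compactness
  set R : ℝ := 2 * Real.pi + Y with hR
  have hmem : ∀ k, w k ∈ Metric.closedBall (0:ℂ) R := by
    intro k
    rw [Metric.mem_closedBall, dist_zero_right, hR]
    calc ‖w k‖ ≤ |(w k).re| + |(w k).im| := by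
          exact Complex.norm_le_abs_re_add_abs_im _
      _ ≤ 2 * Real.pi + Y := by
          have := (hre k).1; have := (hre k).2; have := habs k
          rw [_root_.abs_of_nonneg (hre k).1]; linarith
  obtain ⟨a, -, φ, hφmono, hφtend⟩ :=
    (isCompact_closedBall (0:ℂ) R).tendsto_subseq hmem
  have httend : Tendsto (fun k => t (φ k)) atTop (𝓝 0) := by
    have h0 : Tendsto t atTop (𝓝 0) := by
      rw [htdef]
      simpa using (tendsto_one_div_add_atTop_nhds_zero_nat : Tendsto (fun n : ℕ => 1 / ((n : ℝ) + 1)) atTop (𝓝 0)).neg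
    exact h0.comp hφmono.tendsto_atTop
  -- Xi 0 a = 0
  have hXia : Xi g Φ 0 a = 0 := by
    have h1 : Tendsto (fun k => Xi g Φ (t (φ k)) (w (φ k))) atTop (𝓝 (Xi g Φ 0 a)) := by
      have := ((continuous_Xi g Φ).tendsto ((0:ℝ), a)).comp (httend.prodMk_nhds hφtend)
      exact this
    have h2 : Tendsto (fun k => Xi g Φ (t (φ k)) (w (φ k))) atTop (𝓝 0) := by
      simp only [hw0]; exact tendsto_const_nhds
    exact tendsto_nhds_unique h1 h2
  have haim : a.im = 0 := hreal a hXia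
  set c : ℂ := XiD g Φ 0 a with hc
  have hcd : deriv (Xi g Φ 0) a = c := (hasDerivAt_Xi g Φ 0 a).deriv
  have hcne : c ≠ 0 := hcd ▸ hsimple a hXia
  -- continuity of XiD at (0, a)
  have hcont : ContinuousAt (fun p : ℝ × ℂ => XiD g Φ p.1 p.2) ((0:ℝ), a) :=
    (continuous_XiD g Φ).continuousAt
  rw [Metric.continuousAt_iff] at hcont
  obtain ⟨δ, hδpos, hδ⟩ := hcont (‖c‖ / 2) (half_pos (norm_pos_iff.mpr hcne))
  -- injectivity of zeros in the ball
  have hinj : ∀ t' : ℝ, dist t' 0 < δ → ∀ x ∈ Metric.ball a δ, ∀ y ∈ Metric.ball a δ,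
      Xi g Φ t' x = 0 → Xi g Φ t' y = 0 → x = y := by
    intro t' ht' x hx y hy hx0 hy0
    have hF : ∀ x ∈ Metric.ball a δ, HasFDerivWithinAt (fun z => Xi g Φ t' z - c * z)
        (ContinuousLinearMap.smulRight (1 : ℂ →L[ℂ] ℂ) (XiD g Φ t' x - c))
        (Metric.ball a δ) x := by
      intro u hu
      have h1 : HasDerivAt (fun z => Xi g Φ t' z - c * z) (XiD g Φ t' u - c) u := by
        have h2 : HasDerivAt (fun z : ℂ => c * z) c u := by
          simpa using (hasDerivAt_id u).const_mul c
        exact (hasDerivAt_Xi g Φ t' u).sub h2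
      exact h1.hasFDerivAt.hasFDerivWithinAt
    have hbound : ∀ u ∈ Metric.ball a δ,
        ‖ContinuousLinearMap.smulRight (1 : ℂ →L[ℂ] ℂ) (XiD g Φ t' u - c)‖ ≤ ‖c‖ / 2 := by
      intro u hu
      rw [ContinuousLinearMap.norm_smulRight_apply, ContinuousLinearMap.one_def,
        ContinuousLinearMap.norm_id, one_mul]
      have hd : dist ((t', u) : ℝ × ℂ) ((0:ℝ), a) < δ := by
        rw [Prod.dist_eq]
        exact max_lt ht' (Metric.mem_ball.mp hu)
      have := hδ hd
      rw [dist_eq_norm] at this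
      exact this.le
    have hmvt := Convex.norm_image_sub_le_of_norm_hasFDerivWithin_le hF hbound
      (convex_ball a δ) hx hy
    rw [hx0, hy0] at hmvt
    -- hmvt : ‖(0 - c*y) - (0 - c*x)‖ ≤ ‖c‖/2 * ‖y - x‖
    have h3 : ‖c‖ * ‖y - x‖ ≤ ‖c‖ / 2 * ‖y - x‖ := by
      have e : (0 : ℂ) - c * y - (0 - c * x) = c * (x - y) := by ring
      rw [e, norm_mul, norm_sub_rev x y] at hmvt
      exact hmvt
    have h4 : ‖y - x‖ = 0 := by
      by_contra h5
      have h6 : 0 < ‖y - x‖ := lt_of_le_of_ne (norm_nonneg _) (Ne.symm h5)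
      have h7 : 0 < ‖c‖ := norm_pos_iff.mpr hcne
      nlinarith
    exact (sub_eq_zero.mp (norm_eq_zero.mp h4)).symm
  -- pick a large index
  have hconj_tend : Tendsto (fun k => (starRingEnd ℂ) (w (φ k))) atTop (𝓝 a) := by
    have h1 : Tendsto (fun k => (starRingEnd ℂ) (w (φ k))) atTop (𝓝 ((starRingEnd ℂ) a)) :=
      (Complex.continuous_conj.tendsto a).comp hφtend
    rwa [Complex.conj_eq_iff_im.mpr haim] at h1
  obtain ⟨N1, hN1⟩ := Metric.tendsto_atTop.mp httend δ hδpos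
  obtain ⟨N2, hN2⟩ := Metric.tendsto_atTop.mp hφtend δ hδpos
  obtain ⟨N3, hN3⟩ := Metric.tendsto_atTop.mp hconj_tend δ hδpos
  set k : ℕ := max N1 (max N2 N3) with hk
  have e1 := hN1 k (le_max_left _ _)
  have e2 := hN2 k (le_trans (le_max_left _ _) (le_max_right _ _))
  have e3 := hN3 k (le_trans (le_max_right _ _) (le_max_right _ _))
  have hzero2 : Xi g Φ (t (φ k)) ((starRingEnd ℂ) (w (φ k))) = 0 := by
    rw [Xi_conj, hw0, map_zero]
  have heqc : w (φ k) = (starRingEnd ℂ) (w (φ k)) :=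
    hinj (t (φ k)) e1 (w (φ k)) (Metric.mem_ball.mpr e2) ((starRingEnd ℂ) (w (φ k)))
      (Metric.mem_ball.mpr e3) (hw0 (φ k)) hzero2
  have him0 : (w (φ k)).im = 0 := by
    have h := congrArg Complex.im heqc
    rw [Complex.conj_im] at h; linarith
  exact hwim_ne (φ k) him0
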